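/- Let δ > 0 and m₂ > 0. Let f : ℝ → ℝ be twice differentiable with |f''(x)| ≤ m₂ for all x ∈ ℝ, and let f_δ : ℝ → ℝ satisfy ‖f_δ − f‖∞ ≤ δ. Set h = √(2δ/m₂). Then for every x ∈ ℝ, |(f_δ(x + h) − f_δ(x − h))/(2h) − f'(x)| ≤ √(2 δ m₂). -/

import Mathlib

open Set

/-- If `|g'| ≤ m·s` on `[0,t]` and `g 0 = 0`, then `|g t| ≤ m t²/2`. -/
lemma quad_bound_aux (g g' : ℝ → ℝ) (hg : ∀ s, HasDerivAt g (g' s) s)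
    (hg0 : g 0 = 0) (m t : ℝ) (ht : 0 ≤ t)
    (hb : ∀ s ∈ Icc (0:ℝ) t, |g' s| ≤ m * s) : |g t| ≤ m * t ^ 2 / 2 := by
  have key : ∀ (σ : ℝ), σ = 1 ∨ σ = -1 → σ * g t ≤ m * t ^ 2 / 2 := by
    intro σ hσ
    set u : ℝ → ℝ := fun s => m * s ^ 2 / 2 - σ * g s with hu
    have hdu : ∀ s, HasDerivAt u (m * s - σ * g' s) s := by
      intro s
      have h1 : HasDerivAt (fun s : ℝ => m * s ^ 2 / 2) (m * (2 * s ^ 1) / 2) s :=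
        ((hasDerivAt_pow 2 s).const_mul m).div_const 2
      have h2 := h1.sub ((hg s).const_mul σ)
      refine h2.congr_deriv ?_
      ring
    have hmono : MonotoneOn u (Icc 0 t) := by
      apply monotoneOn_of_deriv_nonneg (convex_Icc 0 t)
      · exact fun s _ => ((hdu s).continuousAt).continuousWithinAt
      · exact fun s _ => ((hdu s).differentiableAt).differentiableWithinAt
      · intro s hs
        rw [interior_Icc] at hs
        rw [(hdu s).deriv]
        have hb' := hb s ⟨le_of_lt hs.1, le_of_lt hs.2⟩
        have : σ * g' s ≤ m * s := by
          rcases hσ with h | h <;> rw [h]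
          · simpa using (abs_le.1 hb').2
          · have := (abs_le.1 hb').1; linarith
        linarith
    have h0t : u 0 ≤ u t := hmono ⟨le_refl 0, ht⟩ ⟨ht, le_refl t⟩ ht
    simp only [hu, hg0] at h0t
    simp only [ne_eq, OfNat.ofNat_ne_zero, not_false_eq_true, zero_pow, mul_zero,
      zero_div, sub_zero] at h0t
    linarith
  have h1 := key 1 (Or.inl rfl)
  have h2 := key (-1) (Or.inr rfl)
  rw [abs_le]; constructor <;> linarith

/-- stable numerical differentiation via the symmetric divided
difference with stepsize `h = √(2δ/m₂)`. -/
theorem stable_differentiation_bound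
    (δ m₂ : ℝ) (hδ : 0 < δ) (hm₂ : 0 < m₂)
    (f fδ : ℝ → ℝ)
    (hf : Differentiable ℝ f)
    (hf' : Differentiable ℝ (deriv f))
    (hf'' : ∀ x : ℝ, |deriv (deriv f) x| ≤ m₂)
    (hfδ : ∀ x : ℝ, |fδ x - f x| ≤ δ)
    (h : ℝ) (hh : h = Real.sqrt (2 * δ / m₂)) :
    ∀ x : ℝ,
      |(fδ (x + h) - fδ (x - h)) / (2 * h) - deriv f x| ≤ Real.sqrt (2 * δ * m₂) := by
  intro x
  -- positivity of h and its square
  have hq : 0 < 2 * δ / m₂ := by positivity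
  have hh0 : 0 < h := by rw [hh]; exact Real.sqrt_pos.2 hq
  have hh2 : h ^ 2 = 2 * δ / m₂ := by rw [hh, Real.sq_sqrt hq.le]
  have hδh : 2 * δ = m₂ * h ^ 2 := by field_simp at hh2 ⊢; linarith
  -- Lipschitz bound on deriv f
  have hlip : ∀ a b : ℝ, |deriv f b - deriv f a| ≤ m₂ * |b - a| := by
    intro a b
    have := Convex.norm_image_sub_le_of_norm_deriv_le (s := (univ : Set ℝ))
      (fun y _ => hf' y) (fun y _ => by simpa [Real.norm_eq_abs] using hf'' y)
      convex_univ (mem_univ a) (mem_univ b)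
    simpa [Real.norm_eq_abs] using this
  -- Taylor bounds on both sides
  have hplus : |f (x + h) - f x - h * deriv f x| ≤ m₂ * h ^ 2 / 2 := by
    apply quad_bound_aux (fun s => f (x + s) - f x - s * deriv f x)
      (fun s => deriv f (x + s) - deriv f x) _ (by simp) _ _ hh0.le
    · intro s hs
      have := hlip x (x + s)
      simp only [add_sub_cancel_left] at this
      calc |deriv f (x + s) - deriv f x| ≤ m₂ * |s| := this
        _ = m₂ * s := by rw [abs_of_nonneg hs.1]
    · intro s
      have h1 : HasDerivAt (fun s : ℝ => f (x + s)) (deriv f (x + s) * 1) s :=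
        HasDerivAt.comp s (hf (x + s)).hasDerivAt ((hasDerivAt_id s).const_add x)
      have h2 := (h1.sub_const (f x)).sub ((hasDerivAt_id s).mul_const (deriv f x))
      refine h2.congr_deriv ?_; ring
  have hminus : |f (x - h) - f x + h * deriv f x| ≤ m₂ * h ^ 2 / 2 := by
    apply quad_bound_aux (fun s => f (x - s) - f x + s * deriv f x)
      (fun s => -deriv f (x - s) + deriv f x) _ (by simp) _ _ hh0.le
    · intro s hs
      have := hlip (x - s) x
      have he : x - (x - s) = s := by ring
      rw [he, abs_of_nonneg hs.1] at this
      calc |-deriv f (x - s) + deriv f x| = |deriv f x - deriv f (x - s)| := by ring_nf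
        _ ≤ m₂ * s := this
    · intro s
      have h1 : HasDerivAt (fun s : ℝ => f (x - s)) (deriv f (x - s) * (-1)) s :=
        HasDerivAt.comp s (hf (x - s)).hasDerivAt ((hasDerivAt_id s).const_sub x)
      have h2 := (h1.sub_const (f x)).add ((hasDerivAt_id s).mul_const (deriv f x))
      refine h2.congr_deriv ?_; ring
  -- noise bounds
  have hn1 := hfδ (x + h)
  have hn2 := hfδ (x - h)
  -- combine
  have hnum : |fδ (x + h) - fδ (x - h) - 2 * h * deriv f x| ≤ 2 * m₂ * h ^ 2 := by
    have : fδ (x + h) - fδ (x - h) - 2 * h * deriv f x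
        = (fδ (x + h) - f (x + h)) - (fδ (x - h) - f (x - h))
          + (f (x + h) - f x - h * deriv f x) - (f (x - h) - f x + h * deriv f x) := by
      ring
    rw [this]
    have habs : ∀ a b c d : ℝ, |a - b + c - d| ≤ |a| + |b| + |c| + |d| := by
      intro a b c d
      have h1 : |a - b + c - d| ≤ |a - b + c| + |d| := by
        simpa [sub_eq_add_neg] using abs_add_le (a - b + c) (-d)
      have h2 : |a - b + c| ≤ |a - b| + |c| := abs_add_le _ _
      have h3 : |a - b| ≤ |a| + |b| := abs_sub _ _
      linarith
    calc |(fδ (x + h) - f (x + h)) - (fδ (x - h) - f (x - h))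
          + (f (x + h) - f x - h * deriv f x) - (f (x - h) - f x + h * deriv f x)|
        ≤ |(fδ (x + h) - f (x + h))| + |(fδ (x - h) - f (x - h))|
          + |(f (x + h) - f x - h * deriv f x)| + |(f (x - h) - f x + h * deriv f x)| :=
          habs _ _ _ _
      _ ≤ δ + δ + m₂ * h ^ 2 / 2 + m₂ * h ^ 2 / 2 := by gcongr
      _ = 2 * m₂ * h ^ 2 := by linarith
  have hgoal : |(fδ (x + h) - fδ (x - h)) / (2 * h) - deriv f x| ≤ m₂ * h := by
    have heq : (fδ (x + h) - fδ (x - h)) / (2 * h) - deriv f x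
        = (fδ (x + h) - fδ (x - h) - 2 * h * deriv f x) / (2 * h) := by
      field_simp
    rw [heq, abs_div, abs_of_pos (by positivity : (0:ℝ) < 2 * h)]
    rw [div_le_iff₀ (by positivity)]
    calc |fδ (x + h) - fδ (x - h) - 2 * h * deriv f x| ≤ 2 * m₂ * h ^ 2 := hnum
      _ = m₂ * h * (2 * h) := by ring
  have hmh : m₂ * h = Real.sqrt (2 * δ * m₂) := by
    rw [hh, ← Real.sqrt_sq hm₂.le, ← Real.sqrt_mul (by positivity)]
    congr 1
    field_simp
    rw [Real.sq_sqrt (sq_nonneg _)]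
  rwa [hmh] at hgoal
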